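/- Let S₀, …, S_i be a saturation with respect to the PaRC calculus such that the step S_i applies a PaRC inference with premises l ≈ r ⋈ R₁ and C[l'] ⋈ R₂ and conclusion C[r]σ, where σ = mgu(l, l'). Let R be the redundancy formula ∃ȳ (l = l' ∧ l ≻ r ∧ C[l'] ≻ l), where ȳ contains all free variables occurring in l and r but not in C[l']. Then R is admissible for S_i and C[l'], i.e., for every substitution θ grounding for C[l'] with θ ⊨ R, the ground clause C[l']θ is redundant with respect to S_i*. -/

import Mathlib

set_option autoImplicit false

namespace PaRC

/-- First-order terms over a signature `F` with arity function `ar`;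
variables are natural numbers. -/
inductive Trm (F : Type) (ar : F → ℕ) : Type
  | var : ℕ → Trm F ar
  | app : (f : F) → (Fin (ar f) → Trm F ar) → Trm F ar

variable {F : Type} {ar : F → ℕ}

/-- Substitutions. -/
abbrev Subst (F : Type) (ar : F → ℕ) : Type := ℕ → Trm F ar

/-- Applying a substitution to a term. -/
def Trm.subst (σ : Subst F ar) : Trm F ar → Trm F ar
  | .var x => σ x
  | .app f a => .app f (fun i => (a i).subst σ)

/-- Composition of substitutions. -/
def Subst.comp (σ τ : Subst F ar) : Subst F ar := fun x => Trm.subst τ (σ x)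

/-- A term is ground if it contains no variables. -/
def Trm.IsGround : Trm F ar → Prop
  | .var _ => False
  | .app _ a => ∀ i, (a i).IsGround

/-- Free variables of a term. -/
def Trm.fvars : Trm F ar → Set ℕ
  | .var x => {x}
  | .app _ a => ⋃ i, (a i).fvars

/-- Subterm at a position (list of argument indices). -/
def Trm.atPos : Trm F ar → List ℕ → Option (Trm F ar)
  | t, [] => some t
  | .var _, _ :: _ => none
  | .app f a, i :: p => if h : i < ar f then Trm.atPos (a ⟨i, h⟩) p else none

/-- Replace the subterm at a given position. -/
def Trm.replace : Trm F ar → List ℕ → Trm F ar → Trm F ar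
  | _, [], u => u
  | .var x, _ :: _, _ => .var x
  | .app f a, i :: p, u =>
      if h : i < ar f then
        .app f (Function.update a ⟨i, h⟩ (Trm.replace (a ⟨i, h⟩) p u))
      else .app f a

/-- An equality literal: polarity together with the two sides. -/
structure Lit (F : Type) (ar : F → ℕ) : Type where
  pos : Bool
  lhs : Trm F ar
  rhs : Trm F ar

def Lit.subst (σ : Subst F ar) (L : Lit F ar) : Lit F ar :=
  ⟨L.pos, Trm.subst σ L.lhs, Trm.subst σ L.rhs⟩

def Lit.IsGround (L : Lit F ar) : Prop := L.lhs.IsGround ∧ L.rhs.IsGround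

def Lit.fvars (L : Lit F ar) : Set ℕ := L.lhs.fvars ∪ L.rhs.fvars

/-- A clause is a (finite) multiset of literals. -/
abbrev Clause (F : Type) (ar : F → ℕ) : Type := Multiset (Lit F ar)

def Clause.subst (σ : Subst F ar) (C : Clause F ar) : Clause F ar := C.map (Lit.subst σ)

def Clause.IsGround (C : Clause F ar) : Prop := ∀ L ∈ C, L.IsGround

def Clause.fvars (C : Clause F ar) : Set ℕ := {x | ∃ L ∈ C, x ∈ L.fvars}

/-- A substitution is grounding for a clause if the instance is ground. -/
def GroundingFor (θ : Subst F ar) (C : Clause F ar) : Prop :=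
  Clause.IsGround (Clause.subst θ C)

/-- A term occurs in a clause if it is a subterm of a side of one of its literals. -/
def OccursIn (u : Trm F ar) (C : Clause F ar) : Prop :=
  ∃ L ∈ C, ∃ p, Trm.atPos L.lhs p = some u ∨ Trm.atPos L.rhs p = some u

/-! ### Semantics: Σ-algebras, entailment and satisfiability -/

/-- A Σ-algebra (first-order structure for the purely equational signature). -/
structure Alg (F : Type) (ar : F → ℕ) : Type 1 where
  carrier : Type
  nonempty : Nonempty carrier
  interp : (f : F) → (Fin (ar f) → carrier) → carrier

def Trm.eval (A : Alg F ar) (v : ℕ → A.carrier) : Trm F ar → A.carrier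
  | .var x => v x
  | .app f a => A.interp f (fun i => (a i).eval A v)

def Lit.holds (A : Alg F ar) (v : ℕ → A.carrier) (L : Lit F ar) : Prop :=
  if L.pos then L.lhs.eval A v = L.rhs.eval A v else L.lhs.eval A v ≠ L.rhs.eval A v

/-- A clause is true in an algebra if it is true under every valuation
(variables are implicitly universally quantified). -/
def Clause.validIn (A : Alg F ar) (C : Clause F ar) : Prop :=
  ∀ v : ℕ → A.carrier, ∃ L ∈ C, Lit.holds A v L

/-- First-order entailment between a set of clauses and a clause. -/
def Entails (S : Set (Clause F ar)) (D : Clause F ar) : Prop :=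
  ∀ A : Alg F ar, (∀ C ∈ S, Clause.validIn A C) → Clause.validIn A D

/-- Satisfiability of a set of clauses. -/
def Satisfiable (S : Set (Clause F ar)) : Prop :=
  ∃ A : Alg F ar, ∀ C ∈ S, Clause.validIn A C

/-! ### Simplification orders and their bag extensions -/

/-- A simplification order: a reduction ordering that is total on ground terms
and has the subterm property. -/
structure SimpOrd (F : Type) (ar : F → ℕ) : Type where
  gt : Trm F ar → Trm F ar → Prop
  trans : ∀ {s t u : Trm F ar}, gt s t → gt t u → gt s u
  irrefl : ∀ s : Trm F ar, ¬ gt s s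
  wf : WellFounded (fun s t : Trm F ar => gt t s)
  substStable : ∀ (σ : Subst F ar) {s t : Trm F ar}, gt s t →
    gt (Trm.subst σ s) (Trm.subst σ t)
  ctxStable : ∀ (s : Trm F ar) (p : List ℕ) {l r : Trm F ar}, (Trm.atPos s p).isSome →
    gt l r → gt (Trm.replace s p l) (Trm.replace s p r)
  subterm : ∀ {s t : Trm F ar} (p : List ℕ), Trm.atPos s p = some t → s ≠ t → gt s t
  totalGround : ∀ {s t : Trm F ar}, s.IsGround → t.IsGround → s ≠ t → gt s t ∨ gt t s

/-- Bag (Dershowitz–Manna multiset) extension of an ordering: `N > M`. -/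
def MultGT {α : Type} (r : α → α → Prop) (N M : Multiset α) : Prop :=
  ∃ X Y Z : Multiset α, X ≠ 0 ∧ N = Z + X ∧ M = Z + Y ∧ ∀ y ∈ Y, ∃ x ∈ X, r x y

/-- The multiset of terms associated to a literal:
`{s, t}` for `s ≈ t` and `{s, s, t, t}` for `s ≉ t`. -/
def Lit.ms (L : Lit F ar) : Multiset (Trm F ar) :=
  if L.pos then {L.lhs, L.rhs} else {L.lhs, L.lhs, L.rhs, L.rhs}

/-- The induced ordering on literals. -/
def litGT (O : SimpOrd F ar) (L M : Lit F ar) : Prop := MultGT O.gt L.ms M.ms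

/-- The induced ordering on clauses. -/
def clauseGT (O : SimpOrd F ar) (C D : Clause F ar) : Prop := MultGT (litGT O) C D

def clauseGE (O : SimpOrd F ar) (C D : Clause F ar) : Prop := clauseGT O C D ∨ C = D

/-- A ground clause `D` is redundant w.r.t. a set `S` of ground clauses if it is
entailed by finitely many clauses of `S` that are all smaller than `D`. -/
def Redundant (O : SimpOrd F ar) (S : Set (Clause F ar)) (D : Clause F ar) : Prop :=
  ∃ Cs : List (Clause F ar), (∀ C ∈ Cs, C ∈ S) ∧
    Entails {C | C ∈ Cs} D ∧ ∀ C ∈ Cs, clauseGT O D C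

/-! ### Redundancy formulas and partial clauses -/

/-- Redundancy formulas: first-order formulas over the term algebra extended with
the interpreted predicates `≻` (the simplification order) and equality. -/
inductive RForm (F : Type) (ar : F → ℕ) : Type
  | falsum : RForm F ar
  | verum : RForm F ar
  | eq (s t : Trm F ar) : RForm F ar
  | gt (s t : Trm F ar) : RForm F ar
  | and (a b : RForm F ar) : RForm F ar
  | or (a b : RForm F ar) : RForm F ar
  | ex (x : ℕ) (a : RForm F ar) : RForm F ar

def RForm.subst (σ : Subst F ar) : RForm F ar → RForm F ar
  | .falsum => .falsum
  | .verum => .verum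
  | .eq s t => .eq (Trm.subst σ s) (Trm.subst σ t)
  | .gt s t => .gt (Trm.subst σ s) (Trm.subst σ t)
  | .and a b => .and (a.subst σ) (b.subst σ)
  | .or a b => .or (a.subst σ) (b.subst σ)
  | .ex x a => .ex x (a.subst fun y => if y = x then Trm.var x else σ y)

def RForm.fvars : RForm F ar → Set ℕ
  | .falsum => ∅
  | .verum => ∅
  | .eq s t => s.fvars ∪ t.fvars
  | .gt s t => s.fvars ∪ t.fvars
  | .and a b => a.fvars ∪ b.fvars
  | .or a b => a.fvars ∪ b.fvars
  | .ex x a => a.fvars \ {x}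

/-- Truth of a redundancy formula in the extended term algebra `T_R(Σ)`,
under a valuation `v` mapping variables to (ground) terms. -/
def RForm.realize (O : SimpOrd F ar) (v : Subst F ar) : RForm F ar → Prop
  | .falsum => False
  | .verum => True
  | .eq s t => Trm.subst v s = Trm.subst v t
  | .gt s t => O.gt (Trm.subst v s) (Trm.subst v t)
  | .and a b => a.realize O v ∧ b.realize O v
  | .or a b => a.realize O v ∨ b.realize O v
  | .ex x a => ∃ g : Trm F ar, g.IsGround ∧ a.realize O (Function.update v x g)

/-- `σ ⊨ R`: every ground instance of `Rσ` is true in `T_R(Σ)`. -/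
def RSat (O : SimpOrd F ar) (σ : Subst F ar) (R : RForm F ar) : Prop :=
  ∀ v : Subst F ar, (∀ x, (v x).IsGround) → RForm.realize O v (RForm.subst σ R)

theorem RForm.falsum_fvars_sub (s : Set ℕ) : RForm.fvars (.falsum : RForm F ar) ⊆ s := by
  intro x hx; simp [RForm.fvars] at hx

/-- `s ⪰ t` as a redundancy formula. -/
def RForm.ge (s t : Trm F ar) : RForm F ar := .or (.gt s t) (.eq s t)

/-- `(s ≐ t) ⪰ l` as a redundancy formula. -/
def Lit.geForm (L : Lit F ar) (l : Trm F ar) : RForm F ar :=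
  .or (RForm.ge L.lhs l) (RForm.ge L.rhs l)

/-- `(s ≐ t) ≻ l` as a redundancy formula. -/
def Lit.gtForm (L : Lit F ar) (l : Trm F ar) : RForm F ar :=
  .or (.gt L.lhs l) (.gt L.rhs l)

/-- `C ⪰ l` as a redundancy formula (disjunction over the literals of `C`). -/
noncomputable def Clause.geForm (C : Clause F ar) (l : Trm F ar) : RForm F ar :=
  C.toList.foldr (fun L acc => RForm.or (Lit.geForm L l) acc) RForm.falsum

/-- `C ≻ l` as a redundancy formula (disjunction over the literals of `C`). -/
noncomputable def Clause.gtForm (C : Clause F ar) (l : Trm F ar) : RForm F ar :=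
  C.toList.foldr (fun L acc => RForm.or (Lit.gtForm L l) acc) RForm.falsum

/-- A partial clause `C ⋈ R`: a clause together with a redundancy formula all of
whose free variables occur in the clause. -/
structure PClause (F : Type) (ar : F → ℕ) : Type where
  cl : Clause F ar
  rf : RForm F ar
  hfv : RForm.fvars rf ⊆ Clause.fvars cl

/-- `⌊C ⋈ R⌋`: the ground instances `Cθ` with `θ ⊭ R`. -/
def pgnd (O : SimpOrd F ar) (pc : PClause F ar) : Set (Clause F ar) :=
  {D | ∃ θ : Subst F ar, D = Clause.subst θ pc.cl ∧ Clause.IsGround D ∧ ¬ RSat O θ pc.rf}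

/-- `⌊S⌋` for a set of partial clauses. -/
def gndS (O : SimpOrd F ar) (S : Set (PClause F ar)) : Set (Clause F ar) :=
  ⋃ pc ∈ S, pgnd O pc

/-- `S*`: all ground instances of clauses occurring in `S`. -/
def gstar (S : Set (PClause F ar)) : Set (Clause F ar) :=
  {D | ∃ pc ∈ S, ∃ θ : Subst F ar, D = Clause.subst θ pc.cl ∧ Clause.IsGround D}

/-! ### The PaRC calculus -/

def IsUnifier (σ : Subst F ar) (s t : Trm F ar) : Prop := Trm.subst σ s = Trm.subst σ t

def IsMGU (σ : Subst F ar) (s t : Trm F ar) : Prop :=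
  IsUnifier σ s t ∧ ∀ η : Subst F ar, IsUnifier η s t → ∃ μ : Subst F ar, η = Subst.comp σ μ

/-- A literal selection function satisfying the standard condition w.r.t. `≻`. -/
structure SelFun (F : Type) (ar : F → ℕ) (O : SimpOrd F ar) : Type where
  sel : Clause F ar → Set (Lit F ar)
  subset : ∀ C : Clause F ar, sel C ⊆ {L | L ∈ C}
  nonemptyOn : ∀ C : Clause F ar, C ≠ 0 → (sel C).Nonempty
  standard : ∀ C : Clause F ar,
    (∃ L ∈ sel C, L.pos = false) ∨ ∀ L ∈ sel C, ∀ M ∈ C, ¬ litGT O M L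

/-- The inference rules of the PaRC calculus on partial clauses.
`Inf O sel prems σ concl` means: there is a PaRC inference with premises `prems`,
most general unifier `σ`, and conclusion `concl`; selected literals are the displayed
first literals of the premises. -/
inductive Inf (O : SimpOrd F ar) (sel : SelFun F ar O) :
    List (PClause F ar) → Subst F ar → Clause F ar → Prop
  | sup {l r : Trm F ar} {C₁ : Clause F ar} {R₁ : RForm F ar}
      {h₁ : RForm.fvars R₁ ⊆ Clause.fvars (Lit.mk true l r ::ₘ C₁)}
      {b : Bool} {s t : Trm F ar} {C₂ : Clause F ar} {R₂ : RForm F ar}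
      {h₂ : RForm.fvars R₂ ⊆ Clause.fvars (Lit.mk b s t ::ₘ C₂)}
      {p : List ℕ} {l' : Trm F ar} {σ : Subst F ar} :
      Trm.atPos s p = some l' →
      (∀ x, l' ≠ .var x) →
      IsMGU σ l l' →
      Lit.mk true l r ∈ sel.sel (Lit.mk true l r ::ₘ C₁) →
      Lit.mk b s t ∈ sel.sel (Lit.mk b s t ::ₘ C₂) →
      ¬ RSat O σ (RForm.ge r l) →
      ¬ RSat O σ (RForm.ge t s) →
      ¬ RSat O σ (Clause.geForm C₁ l) →
      (b = true → ¬ RSat O σ (Clause.geForm C₂ s)) →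
      ¬ RSat O σ R₁ →
      ¬ RSat O σ R₂ →
      Inf O sel [⟨Lit.mk true l r ::ₘ C₁, R₁, h₁⟩, ⟨Lit.mk b s t ::ₘ C₂, R₂, h₂⟩] σ
        (Clause.subst σ (Lit.mk b (Trm.replace s p r) t ::ₘ (C₁ + C₂)))
  | eqres {s t : Trm F ar} {C : Clause F ar} {R : RForm F ar}
      {h : RForm.fvars R ⊆ Clause.fvars (Lit.mk false s t ::ₘ C)} {σ : Subst F ar} :
      IsMGU σ s t →
      Lit.mk false s t ∈ sel.sel (Lit.mk false s t ::ₘ C) →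
      ¬ RSat O σ R →
      Inf O sel [⟨Lit.mk false s t ::ₘ C, R, h⟩] σ (Clause.subst σ C)
  | eqfac {s t s' t' : Trm F ar} {C : Clause F ar} {R : RForm F ar}
      {h : RForm.fvars R ⊆ Clause.fvars (Lit.mk true s t ::ₘ Lit.mk true s' t' ::ₘ C)}
      {σ : Subst F ar} :
      IsMGU σ s s' →
      Lit.mk true s t ∈ sel.sel (Lit.mk true s t ::ₘ Lit.mk true s' t' ::ₘ C) →
      Lit.mk true s' t' ∈ sel.sel (Lit.mk true s t ::ₘ Lit.mk true s' t' ::ₘ C) →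
      ¬ RSat O σ (RForm.ge t s) →
      ¬ RSat O σ (RForm.gt t' t) →
      ¬ RSat O σ (Clause.gtForm C s) →
      ¬ RSat O σ R →
      Inf O sel [⟨Lit.mk true s t ::ₘ Lit.mk true s' t' ::ₘ C, R, h⟩] σ
        (Clause.subst σ (Lit.mk true s t ::ₘ Lit.mk false t t' ::ₘ C))

/-! ### Saturation -/

/-- A saturation w.r.t. the PaRC calculus: `S 0` consists of partial clauses of the
form `C ⋈ ⊥`, and each step is either an inference step or a redundancy step. -/
structure Saturation (O : SimpOrd F ar) (sel : SelFun F ar O) : Type where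
  S : ℕ → Set (PClause F ar)
  init : ∀ pc ∈ S 0, pc.rf = RForm.falsum
  step : ∀ i : ℕ,
    (∃ (prems : List (PClause F ar)) (σ : Subst F ar) (concl : Clause F ar),
        (∀ pc ∈ prems, pc ∈ S i) ∧ Inf O sel prems σ concl ∧
        S (i + 1) = S i ∪ {⟨concl, RForm.falsum, RForm.falsum_fvars_sub _⟩}) ∨
    (∃ pc ∈ S i, ∃ (R₂ : RForm F ar)
        (h : RForm.fvars (RForm.or pc.rf R₂) ⊆ Clause.fvars pc.cl),
        (∀ θ : Subst F ar, GroundingFor θ pc.cl → RSat O θ R₂ →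
          Redundant O (gstar (S i)) (Clause.subst θ pc.cl)) ∧
        S (i + 1) = (S i \ {pc}) ∪ {⟨pc.cl, RForm.or pc.rf R₂, h⟩})

variable {O : SimpOrd F ar} {sel : SelFun F ar O}

/-- `S_ω = ⋃ i, S i`. -/
def Saturation.Somega (𝕊 : Saturation O sel) : Set (PClause F ar) := ⋃ i, 𝕊.S i

/-- The limit `⋃_{i≥0} ⋂_{j≥i} ⌊S_j⌋` of a saturation. -/
def Saturation.limit (𝕊 : Saturation O sel) : Set (Clause F ar) :=
  ⋃ i : ℕ, ⋂ j : ℕ, ⋂ (_ : j ≥ i), gndS O (𝕊.S j)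

/-- A ground clause is persistent if it belongs to the limit. -/
def Saturation.Persistent (𝕊 : Saturation O sel) (C : Clause F ar) : Prop := C ∈ 𝕊.limit

/-- Fairness of a saturation. -/
def Saturation.Fair (𝕊 : Saturation O sel) : Prop :=
  ∀ (prems : List (PClause F ar)) (σ : Subst F ar) (concl : Clause F ar) (ρ : Subst F ar),
    Inf O sel prems σ concl →
    (∀ pc ∈ prems, 𝕊.Persistent (Clause.subst ρ (Clause.subst σ pc.cl))) →
    ∃ i : ℕ, (⟨concl, RForm.falsum, RForm.falsum_fvars_sub _⟩ : PClause F ar) ∈ 𝕊.S i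

/-! ### Ground rewrite systems and the model construction -/

/-- One-step ground rewriting with a set of (ground) rewrite rules. -/
def Rw (I : Set (Trm F ar × Trm F ar)) (s t : Trm F ar) : Prop :=
  ∃ lr ∈ I, ∃ p : List ℕ, Trm.atPos s p = some lr.1 ∧ t = Trm.replace s p lr.2

def RwStar (I : Set (Trm F ar × Trm F ar)) : Trm F ar → Trm F ar → Prop :=
  Relation.ReflTransGen (Rw I)

/-- A term is irreducible (a normal form) in `I`. -/
def NormalForm (I : Set (Trm F ar × Trm F ar)) (t : Trm F ar) : Prop := ∀ u, ¬ Rw I t u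

/-- `s` and `t` have the same normal form in `I`. -/
def SameNF (I : Set (Trm F ar × Trm F ar)) (s t : Trm F ar) : Prop :=
  ∃ u : Trm F ar, RwStar I s u ∧ RwStar I t u ∧ NormalForm I u

/-- Truth of a ground clause in the interpretation given by a rewrite system. -/
def TrueIn (I : Set (Trm F ar × Trm F ar)) (C : Clause F ar) : Prop :=
  ∃ L ∈ C, if L.pos then SameNF I L.lhs L.rhs else ¬ SameNF I L.lhs L.rhs

def NonOverlapping (I : Set (Trm F ar × Trm F ar)) : Prop :=
  ∀ lr ∈ I, ∀ lr' ∈ I, lr ≠ lr' → ∀ p : List ℕ, Trm.atPos (Prod.fst lr) p ≠ some (Prod.fst lr')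

def Terminating (I : Set (Trm F ar × Trm F ar)) : Prop :=
  WellFounded (fun s t : Trm F ar => Rw I t s)

def Confluent (I : Set (Trm F ar × Trm F ar)) : Prop :=
  ∀ a b c : Trm F ar, RwStar I a b → RwStar I a c → ∃ d, RwStar I b d ∧ RwStar I c d

/-- The productivity condition of the model construction: there is a partial clause
`(l₁ ≈ r₁ ∨ C ⋈ R) ∈ S_ω` (with `l₁ ≈ r₁` selected) and a grounding substitution `θ`
with `l₁θ = l`, `l₁θ ≻ r₁θ`, `l₁θ ≻ Cθ`, `θ ⊭ R`, `I_{≺l} ⊭ Cθ`, producing the rule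
`l → rr` where `rr = r₁θ`. -/
def ProducesWith (O : SimpOrd F ar) (sel : SelFun F ar O) (Sω : Set (PClause F ar))
    (Ipre : Set (Trm F ar × Trm F ar)) (l rr : Trm F ar) : Prop :=
  ∃ (l₁ r₁ : Trm F ar) (C : Clause F ar) (R : RForm F ar)
    (h : RForm.fvars R ⊆ Clause.fvars (Lit.mk true l₁ r₁ ::ₘ C)) (θ : Subst F ar),
    (⟨Lit.mk true l₁ r₁ ::ₘ C, R, h⟩ : PClause F ar) ∈ Sω ∧
    Lit.mk true l₁ r₁ ∈ sel.sel (Lit.mk true l₁ r₁ ::ₘ C) ∧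
    GroundingFor θ (Lit.mk true l₁ r₁ ::ₘ C) ∧
    Trm.subst θ l₁ = l ∧
    O.gt (Trm.subst θ l₁) (Trm.subst θ r₁) ∧
    (∀ L ∈ Clause.subst θ C, O.gt (Trm.subst θ l₁) L.lhs ∧ O.gt (Trm.subst θ l₁) L.rhs) ∧
    ¬ RSat O θ R ∧
    ¬ TrueIn Ipre (Clause.subst θ C) ∧
    rr = Trm.subst θ r₁

/-- The rewrite system `I_l` of the model construction, defined by well-founded
recursion on `≻`. -/
noncomputable def Interp (O : SimpOrd F ar) (sel : SelFun F ar O)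
    (Sω : Set (PClause F ar)) : Trm F ar → Set (Trm F ar × Trm F ar) :=
  WellFounded.fix (C := fun _ => Set (Trm F ar × Trm F ar)) O.wf
    (fun l Irec =>
      let Ipre : Set (Trm F ar × Trm F ar) := ⋃ (r : Trm F ar), ⋃ (h : O.gt l r), Irec r h
      letI := Classical.propDecidable
      if h : NormalForm Ipre l ∧ ∃ rr, ProducesWith O sel Sω Ipre l rr then
        Ipre ∪ {(l, h.2.choose)}
      else Ipre)

/-- The rewrite system `I_{≺l}` of the model construction. -/
noncomputable def IPre (O : SimpOrd F ar) (sel : SelFun F ar O)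
    (Sω : Set (PClause F ar)) (l : Trm F ar) : Set (Trm F ar × Trm F ar) :=
  ⋃ (r : Trm F ar), ⋃ (_ : O.gt l r), Interp O sel Sω r

/-- The rewrite system `I_ω = ⋃_l I_l` of the model construction. -/
noncomputable def IOmega (O : SimpOrd F ar) (sel : SelFun F ar O)
    (Sω : Set (PClause F ar)) : Set (Trm F ar × Trm F ar) :=
  ⋃ (l : Trm F ar), Interp O sel Sω l

/-! ### Auxiliary lemmas for the admissibility proof -/

lemma subst_subst (τ σ : Subst F ar) : ∀ s : Trm F ar,
    Trm.subst τ (Trm.subst σ s) = Trm.subst (fun x => Trm.subst τ (σ x)) s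
  | .var x => rfl
  | .app f a => by
    simp only [Trm.subst]
    exact congrArg _ (funext fun i => subst_subst τ σ (a i))

lemma subst_congr {σ τ : Subst F ar} : ∀ {s : Trm F ar},
    (∀ x ∈ s.fvars, σ x = τ x) → Trm.subst σ s = Trm.subst τ s
  | .var x, h => h x (by simp [Trm.fvars])
  | .app f a, h => by
    simp only [Trm.subst]
    refine congrArg _ (funext fun i => subst_congr fun x hx => h x ?_)
    simp only [Trm.fvars, Set.mem_iUnion]
    exact ⟨i, hx⟩

lemma subst_ground {σ : Subst F ar} : ∀ {s : Trm F ar}, s.IsGround → Trm.subst σ s = s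
  | .var _, h => h.elim
  | .app f a, h => by
    simp only [Trm.subst]
    exact congrArg _ (funext fun i => subst_ground (h i))

lemma subst_all_ground {σ : Subst F ar} (hσ : ∀ x, (σ x).IsGround) :
    ∀ s : Trm F ar, (Trm.subst σ s).IsGround
  | .var x => hσ x
  | .app f a => fun i => subst_all_ground hσ (a i)

lemma ground_var_of_subst {σ : Subst F ar} : ∀ {s : Trm F ar},
    (Trm.subst σ s).IsGround → ∀ x ∈ s.fvars, (σ x).IsGround
  | .var y, h, x, hx => by
    simp only [Trm.fvars, Set.mem_singleton_iff] at hx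
    exact hx ▸ h
  | .app f a, h, x, hx => by
    simp only [Trm.fvars, Set.mem_iUnion] at hx
    obtain ⟨i, hi⟩ := hx
    exact ground_var_of_subst (h i) x hi

lemma clause_subst_ground {η : Subst F ar} (hη : ∀ x, (η x).IsGround)
    (X : Clause F ar) : Clause.IsGround (Clause.subst η X) := by
  intro L hL
  obtain ⟨L₀, _, rfl⟩ := Multiset.mem_map.1 hL
  exact ⟨subst_all_ground hη _, subst_all_ground hη _⟩

lemma clause_subst_subst (μ σ : Subst F ar) (X : Clause F ar) :
    Clause.subst μ (Clause.subst σ X) = Clause.subst (Subst.comp σ μ) X := by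
  simp only [Clause.subst, Multiset.map_map]
  refine Multiset.map_congr rfl fun L _ => ?_
  simp only [Function.comp_apply, Lit.subst, Subst.comp]
  exact congrArg₂ _ (subst_subst μ σ L.lhs) (subst_subst μ σ L.rhs)

lemma atPos_nil (t : Trm F ar) : Trm.atPos t [] = some t := by cases t <;> rfl

lemma atPos_var (x i : ℕ) (p : List ℕ) :
    Trm.atPos (.var x : Trm F ar) (i :: p) = none := rfl

lemma replace_nil (t x : Trm F ar) : Trm.replace t [] x = x := by cases t <;> rfl

lemma atPos_app (f : F) (a : Fin (ar f) → Trm F ar) (i : ℕ) (p : List ℕ) :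
    Trm.atPos (.app f a) (i :: p) =
      if h : i < ar f then Trm.atPos (a ⟨i, h⟩) p else none := rfl

lemma replace_app (f : F) (a : Fin (ar f) → Trm F ar) (i : ℕ) (p : List ℕ)
    (u : Trm F ar) :
    Trm.replace (.app f a) (i :: p) u =
      if h : i < ar f then
        .app f (Function.update a ⟨i, h⟩ (Trm.replace (a ⟨i, h⟩) p u))
      else .app f a := rfl

lemma atPos_subst (η : Subst F ar) : ∀ (p : List ℕ) (s a : Trm F ar),
    Trm.atPos s p = some a → Trm.atPos (Trm.subst η s) p = some (Trm.subst η a)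
  | [], s, a, h => by
    rw [atPos_nil] at h
    cases h
    exact atPos_nil _
  | i :: p, .var x, a, h => by rw [atPos_var] at h; cases h
  | i :: p, .app f arg, a, h => by
    rw [atPos_app] at h
    split at h
    · simp only [Trm.subst]
      rw [atPos_app, dif_pos ‹i < ar f›]
      exact atPos_subst η p _ a h
    · exact absurd h (by simp)

lemma replace_subst (η : Subst F ar) : ∀ (p : List ℕ) (s a x : Trm F ar),
    Trm.atPos s p = some a →
    Trm.subst η (Trm.replace s p x) = Trm.replace (Trm.subst η s) p (Trm.subst η x)
  | [], s, a, x, _ => by rw [replace_nil, replace_nil]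
  | i :: p, .var y, a, x, h => by rw [atPos_var] at h; cases h
  | i :: p, .app f arg, a, x, h => by
    rw [atPos_app] at h
    split at h
    · simp only [Trm.subst]
      rw [replace_app, replace_app, dif_pos ‹i < ar f›, dif_pos ‹i < ar f›]
      simp only [Trm.subst]
      refine congrArg _ (funext fun j => ?_)
      by_cases hj : j = ⟨i, ‹i < ar f›⟩
      · subst hj
        rw [Function.update_self, Function.update_self]
        exact replace_subst η p _ a x h
      · rw [Function.update_of_ne hj, Function.update_of_ne hj]
    · exact absurd h (by simp)

lemma replace_atPos_self : ∀ (p : List ℕ) (s a : Trm F ar),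
    Trm.atPos s p = some a → Trm.replace s p a = s
  | [], s, a, h => by
    rw [atPos_nil] at h
    cases h
    exact replace_nil _ _
  | i :: p, .var y, a, h => by rw [atPos_var] at h; cases h
  | i :: p, .app f arg, a, h => by
    rw [atPos_app] at h
    split at h
    · rw [replace_app, dif_pos ‹i < ar f›, replace_atPos_self p _ a h,
        Function.update_eq_self]
    · exact absurd h (by simp)

lemma eval_replace (A : Alg F ar) (v : ℕ → A.carrier) :
    ∀ (p : List ℕ) (s a bt : Trm F ar), Trm.atPos s p = some a →
    Trm.eval A v bt = Trm.eval A v a →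
    Trm.eval A v (Trm.replace s p bt) = Trm.eval A v s
  | [], s, a, bt, h, he => by
    rw [atPos_nil] at h
    cases h
    rw [replace_nil]
    exact he
  | i :: p, .var y, a, bt, h, he => by rw [atPos_var] at h; cases h
  | i :: p, .app f arg, a, bt, h, he => by
    rw [atPos_app] at h
    split at h
    · rw [replace_app, dif_pos ‹i < ar f›]
      simp only [Trm.eval]
      refine congrArg _ (funext fun j => ?_)
      by_cases hj : j = ⟨i, ‹i < ar f›⟩
      · subst hj
        rw [Function.update_self]
        exact eval_replace A v p _ a bt h he
      · rw [Function.update_of_ne hj]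
    · exact absurd h (by simp)

lemma ex_extract (O : SimpOrd F ar) (body : RForm F ar) :
    ∀ (ys : List ℕ) (θ v : Subst F ar), (∀ x, (v x).IsGround) →
    RForm.realize O v (RForm.subst θ (ys.foldr RForm.ex body)) →
    ∃ w : Subst F ar, (∀ x, (w x).IsGround) ∧
      RForm.realize O w
        (RForm.subst (fun x => if x ∈ ys then Trm.var x else θ x) body)
  | [], θ, v, hv, h => ⟨v, hv, by simpa using h⟩
  | y :: ys, θ, v, hv, h => by
    simp only [List.foldr, RForm.subst, RForm.realize] at h
    obtain ⟨g, hg, hreal⟩ := h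
    have hv' : ∀ x, ((Function.update v y g) x).IsGround := by
      intro x
      rcases eq_or_ne x y with rfl | hx
      · simpa using hg
      · simpa [Function.update_of_ne hx] using hv x
    obtain ⟨w, hw, hwr⟩ := ex_extract O body ys _ _ hv' hreal
    refine ⟨w, hw, ?_⟩
    have : (fun x => if x ∈ ys then Trm.var x else
        (fun z => if z = y then Trm.var y else θ z) x) =
        (fun x => if x ∈ y :: ys then Trm.var x else θ x) := by
      funext x
      by_cases h1 : x ∈ ys
      · simp [h1]
      · by_cases h2 : x = y <;> simp [h1, h2]
    rwa [this] at hwr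

lemma gtForm_extract_list (O : SimpOrd F ar) (w σ : Subst F ar) (l : Trm F ar) :
    ∀ (ls : List (Lit F ar)),
    RForm.realize O w (RForm.subst σ
      (ls.foldr (fun L acc => RForm.or (Lit.gtForm L l) acc) RForm.falsum)) →
    ∃ L ∈ ls, O.gt (Trm.subst w (Trm.subst σ L.lhs)) (Trm.subst w (Trm.subst σ l)) ∨
      O.gt (Trm.subst w (Trm.subst σ L.rhs)) (Trm.subst w (Trm.subst σ l))
  | [], h => by simp [RForm.subst, RForm.realize] at h
  | L :: ls, h => by
    simp only [List.foldr, RForm.subst, RForm.realize, Lit.gtForm] at h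
    rcases h with (h | h) | h
    · exact ⟨L, List.mem_cons_self, Or.inl h⟩
    · exact ⟨L, List.mem_cons_self, Or.inr h⟩
    · obtain ⟨M, hM, hM2⟩ := gtForm_extract_list O w σ l ls h
      exact ⟨M, List.mem_cons_of_mem _ hM, hM2⟩

lemma gtForm_extract (O : SimpOrd F ar) (w σ : Subst F ar) (l : Trm F ar)
    (C : Clause F ar)
    (h : RForm.realize O w (RForm.subst σ (Clause.gtForm C l))) :
    ∃ L ∈ C, O.gt (Trm.subst w (Trm.subst σ L.lhs)) (Trm.subst w (Trm.subst σ l)) ∨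
      O.gt (Trm.subst w (Trm.subst σ L.rhs)) (Trm.subst w (Trm.subst σ l)) := by
  obtain ⟨L, hL, h2⟩ := gtForm_extract_list O w σ l C.toList h
  exact ⟨L, (Multiset.mem_toList).1 hL, h2⟩

lemma lhs_mem_ms (L : Lit F ar) : L.lhs ∈ L.ms := by
  unfold Lit.ms; split <;> simp

lemma rhs_mem_ms (L : Lit F ar) : L.rhs ∈ L.ms := by
  unfold Lit.ms; split <;> simp

lemma ms_ne_zero (L : Lit F ar) : L.ms ≠ 0 := by
  unfold Lit.ms; split <;> simp

lemma pair_eq {α : Type*} (a b : α) : ({a, b} : Multiset α) = {b} + {a} :=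
  Quot.sound (List.perm_append_comm (l₁ := [a]) (l₂ := [b]))

lemma quad_eq {α : Type*} (a b : α) :
    ({a, a, b, b} : Multiset α) = {b, b} + {a, a} :=
  Quot.sound (List.perm_append_comm (l₁ := [a, a]) (l₂ := [b, b]))

/-- Demodulation steps are admissible: if the step `S i` applies a
Sup inference with premises `l ≈ r ⋈ R₁` and `C[l'] ⋈ R₂` and conclusion `C[r]σ`
where `σ = mgu(l, l')`, then the redundancy formula
`∃ȳ (l = l' ∧ l ≻ r ∧ C[l'] ≻ l)` (with `ȳ` the variables of `l, r` not in `C[l']`)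
is admissible for `S i` and `C[l']`. -/
theorem demodulation_admissible {F : Type} {ar : F → ℕ} (hF : Finite F) (hconst : ∃ c : F, ar c = 0)
    (O : SimpOrd F ar) (sel : SelFun F ar O) (𝕊 : Saturation O sel) (i : ℕ)
    (l r : Trm F ar) (R₁ : RForm F ar)
    (h₁ : RForm.fvars R₁ ⊆ Clause.fvars ({Lit.mk true l r} : Clause F ar))
    (b : Bool) (u t : Trm F ar) (D₀ : Clause F ar) (R₂ : RForm F ar)
    (h₂ : RForm.fvars R₂ ⊆ Clause.fvars (Lit.mk b u t ::ₘ D₀))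
    (p : List ℕ) (l' : Trm F ar) (σ : Subst F ar)
    (hpos : Trm.atPos u p = some l')
    (hmgu : IsMGU σ l l')
    (hinf : Inf O sel [⟨{Lit.mk true l r}, R₁, h₁⟩, ⟨Lit.mk b u t ::ₘ D₀, R₂, h₂⟩] σ
      (Clause.subst σ (Lit.mk b (Trm.replace u p r) t ::ₘ D₀)))
    (hp₁ : (⟨{Lit.mk true l r}, R₁, h₁⟩ : PClause F ar) ∈ 𝕊.S i)
    (hp₂ : (⟨Lit.mk b u t ::ₘ D₀, R₂, h₂⟩ : PClause F ar) ∈ 𝕊.S i)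
    (hcon : (⟨Clause.subst σ (Lit.mk b (Trm.replace u p r) t ::ₘ D₀), RForm.falsum,
        RForm.falsum_fvars_sub _⟩ : PClause F ar) ∈ 𝕊.S i)
    (ys : List ℕ)
    (hys : ∀ x : ℕ, x ∈ ys ↔
      x ∈ (Trm.fvars l ∪ Trm.fvars r) \ Clause.fvars (Lit.mk b u t ::ₘ D₀)) :
    ∀ θ : Subst F ar, GroundingFor θ (Lit.mk b u t ::ₘ D₀) →
      RSat O θ (ys.foldr RForm.ex
        (RForm.and (RForm.eq l l')
          (RForm.and (RForm.gt l r) (Clause.gtForm (Lit.mk b u t ::ₘ D₀) l)))) →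
      Redundant O (gstar (𝕊.S i)) (Clause.subst θ (Lit.mk b u t ::ₘ D₀)) := by
  classical
  intro θ hθ hR
  obtain ⟨c, hc⟩ := hconst
  have hg₀ : (Trm.app c (fun i => absurd i.isLt (by omega)) :
      Trm F ar).IsGround :=
    fun i => absurd i.isLt (by omega)
  have hreal := hR (fun _ => Trm.app c (fun i => absurd i.isLt (by omega)))
    (fun _ => hg₀)
  obtain ⟨w, hw, hwr⟩ := ex_extract O _ ys θ _ (fun _ => hg₀) hreal
  simp only [RForm.subst, RForm.realize] at hwr
  obtain ⟨heq, hgt, hgtF⟩ := hwr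
  obtain ⟨L₀, hL₀C, hL₀gt⟩ := gtForm_extract O w _ l _ hgtF
  set η : Subst F ar := fun x => Trm.subst w (if x ∈ ys then Trm.var x else θ x) with hηdef
  have hcomp : ∀ s : Trm F ar,
      Trm.subst w (Trm.subst (fun x => if x ∈ ys then Trm.var x else θ x) s) =
      Trm.subst η s := fun s => by rw [hηdef]; exact subst_subst w _ s
  simp only [hcomp] at heq hgt hL₀gt
  have hηg : ∀ x, (η x).IsGround := by
    intro x; rw [hηdef]; exact subst_all_ground hw _
  have hθg : ∀ x ∈ Clause.fvars (Lit.mk b u t ::ₘ D₀), (θ x).IsGround := by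
    rintro x ⟨L, hL, hx⟩
    have hLg : (Lit.subst θ L).IsGround := hθ _ (Multiset.mem_map_of_mem _ hL)
    simp only [Lit.fvars, Set.mem_union] at hx
    rcases hx with hx | hx
    · exact ground_var_of_subst hLg.1 x hx
    · exact ground_var_of_subst hLg.2 x hx
  have hagree : ∀ L ∈ (Lit.mk b u t ::ₘ D₀ : Clause F ar), Lit.subst η L = Lit.subst θ L := by
    intro L hL
    have key : ∀ x ∈ L.fvars, η x = θ x := by
      intro x hx
      have hxC : x ∈ Clause.fvars (Lit.mk b u t ::ₘ D₀) := ⟨L, hL, hx⟩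
      have hxys : x ∉ ys := fun hmem => ((hys x).1 hmem).2 hxC
      rw [hηdef]
      simp only [if_neg hxys]
      exact subst_ground (hθg x hxC)
    simp only [Lit.subst]
    exact congrArg₂ (Lit.mk L.pos)
      (subst_congr fun x hx => key x (Set.mem_union_left _ hx))
      (subst_congr fun x hx => key x (Set.mem_union_right _ hx))
  have hCeq : Clause.subst η (Lit.mk b u t ::ₘ D₀) = Clause.subst θ (Lit.mk b u t ::ₘ D₀) :=
    Multiset.map_congr rfl hagree
  rw [← hCeq]
  have huni : IsUnifier η l l' := heq
  obtain ⟨μ, hμ⟩ := hmgu.2 η huni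
  have hgtlr : O.gt (Trm.subst η l) (Trm.subst η r) := hgt
  have hatp : Trm.atPos (Trm.subst η u) p = some (Trm.subst η l') := atPos_subst η p u l' hpos
  have hrs : Trm.subst η (Trm.replace u p r) = Trm.replace (Trm.subst η u) p (Trm.subst η r) :=
    replace_subst η p u l' r hpos
  have hub : O.gt (Trm.subst η u) (Trm.subst η (Trm.replace u p r)) := by
    rw [hrs]
    have h5 : O.gt (Trm.subst η l') (Trm.subst η r) := huni ▸ hgtlr
    have h6 := O.ctxStable (Trm.subst η u) p (by simp [hatp]) h5
    rwa [replace_atPos_self p _ _ hatp] at h6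
  have hCcons : Clause.subst η (Lit.mk b u t ::ₘ D₀) =
      Lit.subst η (Lit.mk b u t) ::ₘ Clause.subst η D₀ := by
    simp [Clause.subst]
  refine ⟨[Clause.subst η {Lit.mk true l r},
           Clause.subst η (Lit.mk b (Trm.replace u p r) t ::ₘ D₀)], ?_, ?_, ?_⟩
  · intro X hX
    simp only [List.mem_cons, List.not_mem_nil, or_false] at hX
    rcases hX with rfl | rfl
    · exact ⟨⟨{Lit.mk true l r}, R₁, h₁⟩, hp₁, η, rfl, clause_subst_ground hηg _⟩
    · refine ⟨⟨Clause.subst σ (Lit.mk b (Trm.replace u p r) t ::ₘ D₀), RForm.falsum,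
        RForm.falsum_fvars_sub _⟩, hcon, μ, ?_, clause_subst_ground hηg _⟩
      show Clause.subst η _ = _
      rw [clause_subst_subst, ← hμ]
  · intro A hA v
    have hE := hA (Clause.subst η {Lit.mk true l r}) (by simp) v
    have hD := hA (Clause.subst η (Lit.mk b (Trm.replace u p r) t ::ₘ D₀)) (by simp) v
    simp only [Clause.subst, Multiset.map_singleton] at hE
    obtain ⟨L0, hm0, hh0⟩ := hE
    rw [Multiset.mem_singleton] at hm0
    subst hm0
    simp only [Lit.subst, Lit.holds, if_true] at hh0
    obtain ⟨L0, hm0, hh2⟩ := hD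
    simp only [Clause.subst, Multiset.map_cons] at hm0
    rcases Multiset.mem_cons.1 hm0 with rfl | hm'
    · refine ⟨Lit.subst η (Lit.mk b u t),
        Multiset.mem_map_of_mem _ (Multiset.mem_cons_self _ _), ?_⟩
      have hval : Trm.eval A v (Trm.subst η (Trm.replace u p r)) =
          Trm.eval A v (Trm.subst η u) := by
        rw [hrs]
        exact eval_replace A v p _ _ _ hatp (by rw [← huni]; exact hh0.symm)
      simp only [Lit.subst, Lit.holds] at hh2 ⊢
      cases b
      · simp only [Bool.false_eq_true, if_false] at hh2 ⊢
        rw [← hval]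
        exact hh2
      · simp only [if_true] at hh2 ⊢
        rw [← hval]
        exact hh2
    · obtain ⟨M, hM, rfl⟩ := Multiset.mem_map.1 hm'
      exact ⟨Lit.subst η M, Multiset.mem_map_of_mem _ (Multiset.mem_cons_of_mem hM), hh2⟩
  · intro X hX
    simp only [List.mem_cons, List.not_mem_nil, or_false] at hX
    rcases hX with rfl | rfl
    · refine ⟨Clause.subst η (Lit.mk b u t ::ₘ D₀), Clause.subst η {Lit.mk true l r}, 0,
        ?_, (zero_add _).symm, (zero_add _).symm, ?_⟩
      · rw [hCcons]; exact Multiset.cons_ne_zero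
      · intro y hy
        simp only [Clause.subst, Multiset.map_singleton, Multiset.mem_singleton] at hy
        subst hy
        refine ⟨Lit.subst η L₀, Multiset.mem_map_of_mem _ hL₀C, ?_⟩
        refine ⟨(Lit.subst η L₀).ms, (Lit.subst η (Lit.mk true l r)).ms, 0,
          ms_ne_zero _, (zero_add _).symm, (zero_add _).symm, ?_⟩
        intro z hz
        rw [show (Lit.subst η (Lit.mk true l r)).ms = {Trm.subst η l, Trm.subst η r} from by
          simp [Lit.subst, Lit.ms]] at hz
        obtain ⟨s₀, hs₀m, hs₀gt⟩ : ∃ s₀ ∈ (Lit.subst η L₀).ms, O.gt s₀ (Trm.subst η l) := by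
          rcases hL₀gt with h | h
          · exact ⟨_, lhs_mem_ms _, h⟩
          · exact ⟨_, rhs_mem_ms _, h⟩
        rcases Multiset.mem_cons.1 hz with rfl | hz'
        · exact ⟨s₀, hs₀m, hs₀gt⟩
        · rw [Multiset.mem_singleton] at hz'
          subst hz'
          exact ⟨s₀, hs₀m, O.trans hs₀gt hgtlr⟩
    · refine ⟨{Lit.subst η (Lit.mk b u t)}, {Lit.subst η (Lit.mk b (Trm.replace u p r) t)},
        Clause.subst η D₀, by simp, ?_, ?_, ?_⟩
      · rw [hCcons, add_comm, Multiset.singleton_add]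
      · simp only [Clause.subst, Multiset.map_cons]
        rw [add_comm, Multiset.singleton_add]
      · intro y hy
        rw [Multiset.mem_singleton] at hy
        subst hy
        refine ⟨Lit.subst η (Lit.mk b u t), Multiset.mem_singleton_self _, ?_⟩
        cases b
        · refine ⟨{Trm.subst η u, Trm.subst η u},
            {Trm.subst η (Trm.replace u p r), Trm.subst η (Trm.replace u p r)},
            {Trm.subst η t, Trm.subst η t}, by simp, ?_, ?_, ?_⟩
          · rw [show (Lit.subst η (Lit.mk false u t)).ms =
              {Trm.subst η u, Trm.subst η u, Trm.subst η t, Trm.subst η t} from by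
                simp [Lit.subst, Lit.ms]]
            exact quad_eq _ _
          · rw [show (Lit.subst η (Lit.mk false (Trm.replace u p r) t)).ms =
              {Trm.subst η (Trm.replace u p r), Trm.subst η (Trm.replace u p r),
                Trm.subst η t, Trm.subst η t} from by simp [Lit.subst, Lit.ms]]
            exact quad_eq _ _
          · intro z hz
            simp only [Multiset.insert_eq_cons, Multiset.mem_cons,
              Multiset.mem_singleton] at hz
            rcases hz with rfl | rfl <;> exact ⟨Trm.subst η u, by simp, hub⟩
        · refine ⟨{Trm.subst η u}, {Trm.subst η (Trm.replace u p r)},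
            {Trm.subst η t}, by simp, ?_, ?_, ?_⟩
          · rw [show (Lit.subst η (Lit.mk true u t)).ms =
              {Trm.subst η u, Trm.subst η t} from by simp [Lit.subst, Lit.ms]]
            exact pair_eq _ _
          · rw [show (Lit.subst η (Lit.mk true (Trm.replace u p r) t)).ms =
              {Trm.subst η (Trm.replace u p r), Trm.subst η t} from by
                simp [Lit.subst, Lit.ms]]
            exact pair_eq _ _
          · intro z hz
            rw [Multiset.mem_singleton] at hz
            subst hz
            exact ⟨Trm.subst η u, Multiset.mem_singleton_self _, hub⟩

end PaRC
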